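/- Let χ(η) be a parameter with influence function χ¹_η(O) = S_{ab} a(Z)b(Z) + m_a(O,a) + m_b(O,b) + S₀ − χ(η), and suppose for all h ∈ L₂(P_Z), E[S_{ab} a(Z) h(Z) + m_b(O,h)] = 0 and E[S_{ab} b(Z) h(Z) + m_a(O,h)] = 0. Then for any candidate functions a′, b′ ∈ L₂(P_Z) (with all relevant products integrable), χ(η′) − χ(η) + E_η[χ¹_{η′}] = E_η[S_{ab}(a′(Z) − a(Z))(b′(Z) − b(Z))], where χ¹_{η′} is the influence function evaluated at (a′,b′,χ(η′)). -/
import Mathlib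


open MeasureTheory

/-- Mixed bias property for functionals with bilinear influence functions.  With
`χ¹_{η′}(O) = S_{ab}a′(Z)b′(Z) + m_a(O,a′) + m_b(O,b′) + S₀ − χ′`, if
`E[S_{ab}a(Z)h(Z) + m_b(O,h)] = 0` and `E[S_{ab}b(Z)h(Z) + m_a(O,h)] = 0` for all
(integrable) `h`, and `χ = E[Υ(a,b)]`, then
`χ′ − χ + E_η[χ¹_{η′}] = E_η[S_{ab}(a′(Z) − a(Z))(b′(Z) − b(Z))]`. -/
theorem stmt_15 {Ω ζ : Type*} [MeasurableSpace Ω] (μ : Measure Ω)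
    [IsProbabilityMeasure μ]
    (Z : Ω → ζ) (Sab S0 : Ω → ℝ) (ma mb : Ω → (ζ → ℝ) → ℝ)
    (hma_sub : ∀ (ω : Ω) (h₁ h₂ : ζ → ℝ), ma ω (h₁ - h₂) = ma ω h₁ - ma ω h₂)
    (hmb_sub : ∀ (ω : Ω) (h₁ h₂ : ζ → ℝ), mb ω (h₁ - h₂) = mb ω h₁ - mb ω h₂)
    (a b a' b' : ζ → ℝ) (χ χ' : ℝ)
    -- orthogonality: the derivative of the influence function in the direction of one
    -- nuisance is an unbiased estimating function for the other
    (horthb : ∀ h : ζ → ℝ,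
      Integrable (fun ω => Sab ω * a (Z ω) * h (Z ω) + mb ω h) μ →
        ∫ ω, (Sab ω * a (Z ω) * h (Z ω) + mb ω h) ∂μ = 0)
    (hortha : ∀ h : ζ → ℝ,
      Integrable (fun ω => Sab ω * b (Z ω) * h (Z ω) + ma ω h) μ →
        ∫ ω, (Sab ω * b (Z ω) * h (Z ω) + ma ω h) ∂μ = 0)
    -- integrability of the relevant terms
    (hint1 : Integrable (fun ω =>
      Sab ω * a (Z ω) * (b' (Z ω) - b (Z ω)) + mb ω (b' - b)) μ)
    (hint2 : Integrable (fun ω =>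
      Sab ω * b (Z ω) * (a' (Z ω) - a (Z ω)) + ma ω (a' - a)) μ)
    (hint3 : Integrable (fun ω =>
      Sab ω * (a' (Z ω) - a (Z ω)) * (b' (Z ω) - b (Z ω))) μ)
    (hint4 : Integrable (fun ω =>
      Sab ω * a' (Z ω) * b' (Z ω) + ma ω a' + mb ω b' + S0 ω) μ)
    (hint5 : Integrable (fun ω =>
      Sab ω * a (Z ω) * b (Z ω) + ma ω a + mb ω b + S0 ω) μ)
    -- the parameter at η is the mean of Υ(a,b), i.e. E_η[χ¹_η] = 0
    (hχ : ∫ ω, (Sab ω * a (Z ω) * b (Z ω) + ma ω a + mb ω b + S0 ω) ∂μ = χ) :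
    χ' - χ +
        ∫ ω, (Sab ω * a' (Z ω) * b' (Z ω) + ma ω a' + mb ω b' + S0 ω - χ') ∂μ =
      ∫ ω, Sab ω * (a' (Z ω) - a (Z ω)) * (b' (Z ω) - b (Z ω)) ∂μ := by
  have key : ∀ ω, Sab ω * a' (Z ω) * b' (Z ω) + ma ω a' + mb ω b' + S0 ω =
      (Sab ω * (a' (Z ω) - a (Z ω)) * (b' (Z ω) - b (Z ω)))
      + ((Sab ω * a (Z ω) * (b' (Z ω) - b (Z ω)) + mb ω (b' - b))
      + ((Sab ω * b (Z ω) * (a' (Z ω) - a (Z ω)) + ma ω (a' - a))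
      + (Sab ω * a (Z ω) * b (Z ω) + ma ω a + mb ω b + S0 ω))) := by
    intro ω
    have h1 := hma_sub ω a' a
    have h2 := hmb_sub ω b' b
    rw [h1, h2]
    ring
  have hI : ∫ ω, (Sab ω * a' (Z ω) * b' (Z ω) + ma ω a' + mb ω b' + S0 ω) ∂μ =
      (∫ ω, Sab ω * (a' (Z ω) - a (Z ω)) * (b' (Z ω) - b (Z ω)) ∂μ)
      + ((∫ ω, (Sab ω * a (Z ω) * (b' (Z ω) - b (Z ω)) + mb ω (b' - b)) ∂μ)
      + ((∫ ω, (Sab ω * b (Z ω) * (a' (Z ω) - a (Z ω)) + ma ω (a' - a)) ∂μ)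
      + (∫ ω, (Sab ω * a (Z ω) * b (Z ω) + ma ω a + mb ω b + S0 ω) ∂μ))) := by
    have h := integral_add hint3 (hint1.add (hint2.add hint5))
    have h2 := integral_add hint1 (hint2.add hint5)
    have h3 := integral_add hint2 hint5
    simp only [Pi.add_apply] at h h2 h3
    rw [h2, h3] at h
    rw [← h]
    exact integral_congr_ae (Filter.Eventually.of_forall fun ω => key ω)
  have hb0 : ∫ ω, (Sab ω * a (Z ω) * (b' (Z ω) - b (Z ω)) + mb ω (b' - b)) ∂μ = 0 := by
    have := horthb (b' - b) ?_
    · simpa using this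
    · simpa using hint1
  have ha0 : ∫ ω, (Sab ω * b (Z ω) * (a' (Z ω) - a (Z ω)) + ma ω (a' - a)) ∂μ = 0 := by
    have := hortha (a' - a) ?_
    · simpa using this
    · simpa using hint2
  have hsub : ∫ ω, (Sab ω * a' (Z ω) * b' (Z ω) + ma ω a' + mb ω b' + S0 ω - χ') ∂μ
      = (∫ ω, (Sab ω * a' (Z ω) * b' (Z ω) + ma ω a' + mb ω b' + S0 ω) ∂μ) - χ' := by
    rw [integral_sub hint4 (integrable_const χ'), integral_const]
    simp
  rw [hsub, hI, hb0, ha0, hχ]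
  ring
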